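/- arXiv:2003.08938 — 3 statements merged into one kernel-verified Lean document; each statement's English description precedes it below -/
import Mathlib

section
/- There exists a state-adversarial MDP and a stochastic Markovian policy π such that no deterministic Markovian policy π' satisfies Ṽ_{π'∘ν*(π')}(s) ≥ Ṽ_{π∘ν*(π)}(s) for all states s, where ν*(π) denotes an optimal (reward-minimizing) adversary against π. -/
open Finset

/-- Value function of policy `π` under adversary `ν`: total expected discounted reward,
written via powers of the transition matrix of the merged policy `a ↦ π(a|ν(s))`. -/
noncomputable def advValue {S A : Type*} [Fintype S] [Fintype A] [DecidableEq S]
    (p : S → A → S → ℝ) (R : S → A → S → ℝ) (γ : ℝ)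
    (π : S → A → ℝ) (ν : S → S) (s : S) : ℝ :=
  ∑' t : ℕ, γ ^ t *
    (((Matrix.of fun s₁ s₂ => ∑ a, π (ν s₁) a * p s₁ a s₂) ^ t).mulVec
      (fun s₁ => ∑ a, π (ν s₁) a * ∑ s', p s₁ a s' * R s₁ a s')) s

/-- Value of `π` under the optimal (reward-minimizing) adversary constrained to `B`. -/
noncomputable def advOptValue {S A : Type*} [Fintype S] [Fintype A] [DecidableEq S]
    (p : S → A → S → ℝ) (R : S → A → S → ℝ) (γ : ℝ)
    (B : S → Finset S) (π : S → A → ℝ) (s : S) : ℝ :=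
  ⨅ ν : {ν : S → S // ∀ s, ν s ∈ B s}, advValue p R γ π ν.1 s

/-- Example transition kernel: every action leads to state 0. -/
def pEx : Fin 2 → Fin 2 → Fin 2 → ℝ := fun _ _ s' => if s' = 0 then 1 else 0

/-- Example reward: 1 iff the action index matches the state index. -/
def REx : Fin 2 → Fin 2 → Fin 2 → ℝ := fun s a _ => if s = a then 1 else 0

lemma advValue_eq (π : Fin 2 → Fin 2 → ℝ) (hπ : ∀ s, ∑ a, π s a = 1)
    (ν : Fin 2 → Fin 2) (s : Fin 2) :
    advValue pEx REx (1/4) π ν s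
      = (∑ a, π (ν s) a * REx s a 0) + (1/3) * ∑ a, π (ν 0) a * REx 0 a 0 := by
  classical
  set M : Matrix (Fin 2) (Fin 2) ℝ :=
    Matrix.of fun s₁ s₂ => ∑ a, π (ν s₁) a * pEx s₁ a s₂ with hMdef
  set r : Fin 2 → ℝ :=
    (fun s₁ => ∑ a, π (ν s₁) a * ∑ s', pEx s₁ a s' * REx s₁ a s') with hrdef
  have hr : ∀ s₁ : Fin 2, r s₁ = ∑ a, π (ν s₁) a * REx s₁ a 0 := by
    intro s₁
    simp only [hrdef, pEx, Fin.sum_univ_two]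
    norm_num
  have hM : ∀ s₁ s₂, M s₁ s₂ = if s₂ = 0 then 1 else 0 := by
    intro s₁ s₂
    simp only [hMdef, Matrix.of_apply, pEx]
    rw [← Finset.sum_mul, hπ, one_mul]
  -- mulVec of M with any vector is the constant vector v 0
  have hmul : ∀ v : Fin 2 → ℝ, M.mulVec v = fun _ => v 0 := by
    intro v
    funext x
    simp only [Matrix.mulVec, dotProduct, Fin.sum_univ_two, hM]
    norm_num
  have hpow : ∀ t : ℕ, ∀ x : Fin 2, ((M ^ (t + 1)).mulVec r) x = r 0 := by
    intro t
    induction t with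
    | zero => intro x; rw [pow_one, hmul]
    | succ t ih =>
        intro x
        rw [pow_succ', ← Matrix.mulVec_mulVec, hmul]
        exact ih 0
  have hterm : ∀ t : ℕ, (1/4 : ℝ) ^ t * ((M ^ t).mulVec r) s
      = (if t = 0 then r s - r 0 else 0) + (1/4 : ℝ) ^ t * r 0 := by
    intro t
    cases t with
    | zero => simp
    | succ t => simp [hpow t s]
  have hgeo : HasSum (fun t : ℕ => (1/4 : ℝ) ^ t * r 0) ((1 - 1/4)⁻¹ * r 0) :=
    (hasSum_geometric_of_lt_one (by norm_num) (by norm_num)).mul_right _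
  have hind : HasSum (fun t : ℕ => if t = 0 then r s - r 0 else 0) (r s - r 0) :=
    hasSum_ite_eq 0 _
  have hsum : HasSum (fun t : ℕ => (1/4 : ℝ) ^ t * ((M ^ t).mulVec r) s)
      ((r s - r 0) + (1 - 1/4)⁻¹ * r 0) :=
    (hind.add hgeo).congr_fun fun t => hterm t
  rw [advValue, ← hrdef, ← hMdef, hsum.tsum_eq, hr, hr]
  norm_num
  ring

set_option maxHeartbeats 1000000 in
/-- There exists an SA-MDP and a stochastic Markovian policy π such that no
deterministic Markovian policy π' is at least as good as π at every state, under
each policy's optimal adversary. -/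
theorem exists_stochastic_better_than_all_deterministic :
    ∃ (n m : ℕ) (p : Fin n → Fin m → Fin n → ℝ) (R : Fin n → Fin m → Fin n → ℝ)
      (γ : ℝ) (B : Fin n → Finset (Fin n)) (π : Fin n → Fin m → ℝ),
      0 < γ ∧ γ < 1 ∧
      (∀ s a s', 0 ≤ p s a s') ∧ (∀ s a, ∑ s', p s a s' = 1) ∧
      (∀ s, (B s).Nonempty) ∧
      (∀ s a, 0 ≤ π s a) ∧ (∀ s, ∑ a, π s a = 1) ∧
      ∀ π' : Fin n → Fin m, ∃ s : Fin n,
        advOptValue p R γ B (fun s a => if a = π' s then (1 : ℝ) else 0) s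
          < advOptValue p R γ B π s := by
  classical
  refine ⟨2, 2, pEx, REx, 1/4, fun _ => Finset.univ, fun _ _ => 1/2,
    by norm_num, by norm_num, ?_, ?_, fun s => ⟨0, Finset.mem_univ 0⟩,
    by norm_num, ?_, ?_⟩
  · intro s a s'
    unfold pEx; positivity
  · intro s a
    simp [pEx, Fin.sum_univ_two]
  · intro s
    norm_num [Fin.sum_univ_two]
  · intro π'
    have hνne : Nonempty {ν : Fin 2 → Fin 2 // ∀ s, ν s ∈ (fun _ => (Finset.univ : Finset (Fin 2))) s} :=
      ⟨⟨id, fun s => Finset.mem_univ _⟩⟩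
    -- value of the uniform policy is 2/3 everywhere
    have huni : ∀ s : Fin 2, advOptValue pEx REx (1/4) (fun _ => Finset.univ) (fun _ _ => 1/2) s = 2/3 := by
      intro s
      rw [advOptValue]
      have : ∀ ν : {ν : Fin 2 → Fin 2 // ∀ s, ν s ∈ (fun _ => (Finset.univ : Finset (Fin 2))) s},
          advValue pEx REx (1/4) (fun _ _ => (1/2 : ℝ)) ν.1 s = 2/3 := by
        intro ν
        rw [advValue_eq _ (by intro x; norm_num [Fin.sum_univ_two]) ν.1 s]
        have h2 : ∀ x : Fin 2, (∑ a, (1/2 : ℝ) * REx x a 0) = 1/2 := by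
          intro x
          fin_cases x <;> norm_num [REx, Fin.sum_univ_two]
        rw [h2, h2]; norm_num
      simp_rw [this]
      exact ciInf_const
    have hsel : ∀ (x c : Fin 2), (∑ a, (if a = c then (1:ℝ) else 0) * REx x a 0) = REx x c 0 := by
      intro x c
      fin_cases c <;> simp [Fin.sum_univ_two]
    -- value of the deterministic policy under adversary ν
    have hdet : ∀ (ν : Fin 2 → Fin 2) (s : Fin 2),
        advValue pEx REx (1/4) (fun s a => if a = π' s then (1:ℝ) else 0) ν s
          = REx s (π' (ν s)) 0 + (1/3) * REx 0 (π' (ν 0)) 0 := by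
      intro ν s
      rw [advValue_eq _ (by intro x; simp [Fin.sum_univ_two]) ν s, hsel, hsel]
    have hle : ∀ (ν : Fin 2 → Fin 2) (s : Fin 2),
        advOptValue pEx REx (1/4) (fun _ => Finset.univ) (fun s a => if a = π' s then (1:ℝ) else 0) s
          ≤ REx s (π' (ν s)) 0 + (1/3) * REx 0 (π' (ν 0)) 0 := by
      intro ν s
      rw [← hdet ν s, advOptValue]
      have h1 : BddBelow (Set.range fun ν : {ν : Fin 2 → Fin 2 // ∀ s, ν s ∈ (fun _ => (Finset.univ : Finset (Fin 2))) s} =>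
          advValue pEx REx (1/4) (fun s a => if a = π' s then (1:ℝ) else 0) ν.1 s) :=
        Set.Finite.bddBelow (Set.finite_range _)
      apply ciInf_le h1 ⟨ν, fun _ => Finset.mem_univ _⟩
    have two : ∀ i : Fin 2, i = 0 ∨ i = 1 := by decide
    rcases two (π' 0) with h0 | h0
    · rcases two (π' 1) with h1 | h1
      · -- π' = (0,0) : use s = 1, ν = id
        refine ⟨1, lt_of_le_of_lt (hle id 1) ?_⟩
        rw [huni]
        simp only [id, h0, h1, REx]
        norm_num
      · -- π' = (0,1) : use s = 0, ν = const 1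
        refine ⟨0, lt_of_le_of_lt (hle (fun _ => 1) 0) ?_⟩
        rw [huni]
        simp only [h1, REx]
        norm_num
    · -- π' 0 = 1 : use s = 0, ν = const 0
      refine ⟨0, lt_of_le_of_lt (hle (fun _ => 0) 0) ?_⟩
      rw [huni]
      simp only [h0, REx]
      norm_num
end

section
/- Given a finite SA-MDP (S, A, B, R, p, γ) and a fixed policy π, there exists a regular MDP M̂ = (S, Â, R̂, p̂, γ) with action space Â = S such that any optimal deterministic policy of M̂ restricted to actions in B(s) is an optimal adversary ν* for π in the SA-MDP, i.e. Ṽ_{π∘ν*}(s) ≤ Ṽ_{π∘ν}(s) for every state s and every adversary ν with ν(s) ∈ B(s). -/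
set_option maxHeartbeats 1000000


open Finset

/-- Value of deterministic policy `ν` in an MDP with transition `ph` and reward `Rh`. -/
noncomputable def detValue {S Ah : Type*} [Fintype S] [DecidableEq S]
    (ph : S → Ah → S → ℝ) (Rh : S → Ah → S → ℝ) (γ : ℝ) (ν : S → Ah) (s : S) : ℝ :=
  ∑' t : ℕ, γ ^ t *
    (((Matrix.of fun s₁ s₂ => ph s₁ (ν s₁) s₂) ^ t).mulVec
      (fun s₁ => ∑ s', ph s₁ (ν s₁) s' * Rh s₁ (ν s₁) s')) s

/-- A row-stochastic matrix power preserves an upper bound on a vector. -/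
private lemma stoch_pow_mulVec_le {S : Type*} [Fintype S] [DecidableEq S]
    (M : Matrix S S ℝ) (hM0 : ∀ i j, 0 ≤ M i j) (hM1 : ∀ i, ∑ j, M i j = 1)
    (v : S → ℝ) (K : ℝ) (hv : ∀ s, v s ≤ K) :
    ∀ (t : ℕ) (s : S), ((M ^ t).mulVec v) s ≤ K := by
  intro t
  induction t with
  | zero => intro s; simpa [Matrix.one_mulVec] using hv s
  | succ n ih =>
    intro s
    have hrw : (M ^ (n + 1)).mulVec v = M.mulVec ((M ^ n).mulVec v) := by
      rw [Matrix.mulVec_mulVec, ← pow_succ']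
    rw [hrw]
    have hdef : (M.mulVec ((M ^ n).mulVec v)) s = ∑ j, M s j * ((M ^ n).mulVec v) j := by
      simp [Matrix.mulVec, dotProduct]
    rw [hdef]
    calc ∑ j, M s j * ((M ^ n).mulVec v) j ≤ ∑ j, M s j * K :=
          Finset.sum_le_sum fun j _ => mul_le_mul_of_nonneg_left (ih j) (hM0 s j)
      _ = K := by rw [← Finset.sum_mul, hM1, one_mul]

/-- A row-stochastic matrix power preserves an absolute bound on a vector. -/
private lemma stoch_pow_mulVec_abs_le {S : Type*} [Fintype S] [DecidableEq S]
    (M : Matrix S S ℝ) (hM0 : ∀ i j, 0 ≤ M i j) (hM1 : ∀ i, ∑ j, M i j = 1)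
    (v : S → ℝ) (K : ℝ) (hv : ∀ s, |v s| ≤ K) :
    ∀ (t : ℕ) (s : S), |((M ^ t).mulVec v) s| ≤ K := by
  intro t s
  have h1 := stoch_pow_mulVec_le M hM0 hM1 v K (fun s => (abs_le.1 (hv s)).2) t s
  have h2 := stoch_pow_mulVec_le M hM0 hM1 (-v) K
    (fun s => by have := (abs_le.1 (hv s)).1; simp only [Pi.neg_apply]; linarith) t s
  rw [Matrix.mulVec_neg] at h2
  simp only [Pi.neg_apply] at h2
  rw [abs_le]
  exact ⟨by linarith, h1⟩

private lemma summable_geom_mul {γ K : ℝ} (hγ0 : 0 ≤ γ) (hγ1 : γ < 1)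
    (a : ℕ → ℝ) (ha : ∀ t, |a t| ≤ K) : Summable fun t => γ ^ t * a t := by
  refine Summable.of_norm_bounded
    ((summable_geometric_of_lt_one hγ0 hγ1).mul_right K) fun t => ?_
  rw [Real.norm_eq_abs, abs_mul, abs_pow, abs_of_nonneg hγ0]
  exact mul_le_mul_of_nonneg_left (ha t) (pow_nonneg hγ0 t)

/-- Equivalence lemma: for a finite SA-MDP and fixed policy π, there exists a regular
MDP with action space Â = S such that any optimal deterministic policy ν* of that MDP
takes actions in B(s), and ν* is an optimal adversary for π in the SA-MDP. -/
theorem exists_adversary_mdp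
    {S A : Type*} [Fintype S] [Fintype A] [DecidableEq S]
    (p : S → A → S → ℝ) (R : S → A → S → ℝ) (γ : ℝ)
    (hγ0 : 0 < γ) (hγ1 : γ < 1)
    (B : S → Finset S) (hB : ∀ s, (B s).Nonempty)
    (π : S → A → ℝ) (hπ0 : ∀ s a, 0 ≤ π s a) (hπ1 : ∀ s, ∑ a, π s a = 1)
    (hp0 : ∀ s a s', 0 ≤ p s a s') (hp1 : ∀ s a, ∑ s', p s a s' = 1) :
    ∃ (ph : S → S → S → ℝ) (Rh : S → S → S → ℝ),
      (∀ s ah s', 0 ≤ ph s ah s') ∧ (∀ s ah, ∑ s', ph s ah s' = 1) ∧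
      ∀ νstar : S → S,
        (∀ (ν : S → S) (s : S), detValue ph Rh γ ν s ≤ detValue ph Rh γ νstar s) →
        (∀ s, νstar s ∈ B s) ∧
        ∀ ν : S → S, (∀ s, ν s ∈ B s) →
          ∀ s, advValue p R γ π νstar s ≤ advValue p R γ π ν s := by
  classical
  have h1γ : 0 < 1 - γ := by linarith
  set g : S → S → ℝ := fun s ah => -(∑ a, π ah a * ∑ s', p s a s' * R s a s') with hg
  set Rm : ℝ := ∑ s : S, ∑ ah : S, |g s ah| with hRmdef
  have hRm0 : 0 ≤ Rm :=
    Finset.sum_nonneg fun s _ => Finset.sum_nonneg fun ah _ => abs_nonneg _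
  have hgRm : ∀ s ah, |g s ah| ≤ Rm := by
    intro s ah
    calc |g s ah| ≤ ∑ ah', |g s ah'| :=
          Finset.single_le_sum (f := fun ah' => |g s ah'|) (fun x _ => abs_nonneg _) (mem_univ ah)
      _ ≤ Rm :=
          Finset.single_le_sum (f := fun s => ∑ ah', |g s ah'|)
            (fun x _ => Finset.sum_nonneg fun _ _ => abs_nonneg _) (mem_univ s)
  set D : ℝ := (1 - γ)⁻¹ with hDdef
  have hD0 : 0 < D := inv_pos.2 h1γ
  have hD : D * (1 - γ) = 1 := inv_mul_cancel₀ h1γ.ne'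
  have hD1 : 1 ≤ D := by nlinarith [mul_nonneg hD0.le hγ0.le]
  set C : ℝ := -(2 * Rm + 1) * D with hCdef
  have hCneg : C < 0 := by
    rw [hCdef]; nlinarith
  have hCRm : C ≤ -Rm := by
    rw [hCdef]; nlinarith
  have hph1 : ∀ (s ah : S), ∑ s', ∑ a, π ah a * p s a s' = 1 := by
    intro s ah
    rw [Finset.sum_comm]
    simp only [← Finset.mul_sum]
    simp [hp1, hπ1]
  refine ⟨fun s ah s' => ∑ a, π ah a * p s a s',
          fun s ah _ => if ah ∈ B s then g s ah else C,
          fun s ah s' => Finset.sum_nonneg fun a _ => mul_nonneg (hπ0 _ _) (hp0 _ _ _),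
          hph1, ?_⟩
  intro νstar hopt
  have hM0 : ∀ (ν : S → S) (i j : S),
      0 ≤ (Matrix.of fun s₁ s₂ => ∑ a, π (ν s₁) a * p s₁ a s₂ : Matrix S S ℝ) i j :=
    fun ν i j => Finset.sum_nonneg fun a _ => mul_nonneg (hπ0 _ _) (hp0 _ _ _)
  have hM1 : ∀ (ν : S → S) (i : S),
      ∑ j, (Matrix.of fun s₁ s₂ => ∑ a, π (ν s₁) a * p s₁ a s₂ : Matrix S S ℝ) i j = 1 :=
    fun ν i => hph1 i (ν i)
  -- rewrite detValue with a simplified reward vector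
  have hdet : ∀ (ν : S → S) (s : S),
      detValue (fun s ah s' => ∑ a, π ah a * p s a s')
        (fun s ah _ => if ah ∈ B s then g s ah else C) γ ν s =
      ∑' t : ℕ, γ ^ t *
        (((Matrix.of fun s₁ s₂ => ∑ a, π (ν s₁) a * p s₁ a s₂) ^ t).mulVec
          (fun s₁ => if ν s₁ ∈ B s₁ then g s₁ (ν s₁) else C)) s := by
    intro ν s
    simp only [detValue]
    have hr : (fun s₁ => ∑ s', (∑ a, π (ν s₁) a * p s₁ a s') *
        (if ν s₁ ∈ B s₁ then g s₁ (ν s₁) else C)) =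
        fun s₁ => if ν s₁ ∈ B s₁ then g s₁ (ν s₁) else C := by
      funext s₁
      rw [← Finset.sum_mul, hph1, one_mul]
    rw [hr]
  -- Part 1 : the optimal policy always picks actions in B
  have hνBmem : ∀ s, (hB s).choose ∈ B s := fun s => (hB s).choose_spec
  have hmem : ∀ s, νstar s ∈ B s := by
    by_contra hcon
    push_neg at hcon
    obtain ⟨s₀, hs₀⟩ := hcon
    set νB : S → S := fun s => (hB s).choose with hνBdef
    -- upper bound for νstar at s₀
    set M : Matrix S S ℝ := Matrix.of fun s₁ s₂ => ∑ a, π (νstar s₁) a * p s₁ a s₂ with hMdef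
    set r : S → ℝ := fun s => if νstar s ∈ B s then g s (νstar s) else C with hrdef
    have hr_le : ∀ s, r s ≤ Rm := by
      intro s
      simp only [hrdef]
      split
      · exact le_trans (le_abs_self _) (hgRm _ _)
      · linarith
    have hr_abs : ∀ s, |r s| ≤ -C := by
      intro s
      simp only [hrdef]
      split
      · exact le_trans (hgRm _ _) (by linarith)
      · rw [abs_of_nonpos hCneg.le]
    have habs : ∀ t s, |((M ^ t).mulVec r) s| ≤ -C :=
      stoch_pow_mulVec_abs_le M (hM0 νstar) (hM1 νstar) r (-C) hr_abs
    have hle : ∀ t s, ((M ^ t).mulVec r) s ≤ Rm :=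
      stoch_pow_mulVec_le M (hM0 νstar) (hM1 νstar) r Rm hr_le
    have hsum : Summable fun t : ℕ => γ ^ t * ((M ^ t).mulVec r) s₀ :=
      summable_geom_mul hγ0.le hγ1 _ (fun t => habs t s₀)
    have hzero : Matrix.mulVec 1 r s₀ = C := by
      rw [Matrix.one_mulVec]
      simp only [hrdef]
      rw [if_neg hs₀]
    have hup : detValue (fun s ah s' => ∑ a, π ah a * p s a s')
        (fun s ah _ => if ah ∈ B s then g s ah else C) γ νstar s₀ ≤ C + γ * (D * Rm) := by
      rw [hdet νstar s₀]
      rw [Summable.tsum_eq_zero_add hsum]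
      simp only [pow_zero, one_mul, hzero]
      have htail : Summable fun n : ℕ => γ ^ (n + 1) * ((M ^ (n + 1)).mulVec r) s₀ :=
        (summable_nat_add_iff 1).2 hsum
      have hgeo : Summable fun n : ℕ => γ ^ (n + 1) * Rm := by
        have : (fun n : ℕ => γ ^ (n + 1) * Rm) = fun n : ℕ => γ * (γ ^ n * Rm) := by
          funext n; ring
        rw [this]
        exact (((summable_geometric_of_lt_one hγ0.le hγ1).mul_right Rm).mul_left γ)
      have hts := Summable.tsum_le_tsum
        (fun n => mul_le_mul_of_nonneg_left (hle (n + 1) s₀) (pow_nonneg hγ0.le _))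
        htail hgeo
      have hval : ∑' n : ℕ, γ ^ (n + 1) * Rm = γ * (D * Rm) := by
        have h1 : (fun n : ℕ => γ ^ (n + 1) * Rm) = fun n : ℕ => γ * (γ ^ n * Rm) := by
          funext n; ring
        rw [h1, tsum_mul_left, tsum_mul_right,
          tsum_geometric_of_lt_one hγ0.le hγ1, ← hDdef]
      linarith [hts, hval.le, hval.ge]
    -- lower bound for νB at s₀
    set MB : Matrix S S ℝ := Matrix.of fun s₁ s₂ => ∑ a, π (νB s₁) a * p s₁ a s₂ with hMBdef
    set rB : S → ℝ := fun s => if νB s ∈ B s then g s (νB s) else C with hrBdef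
    have hrB_abs : ∀ s, |rB s| ≤ Rm := by
      intro s
      simp only [hrBdef]
      rw [if_pos (hνBmem s)]
      exact hgRm _ _
    have habsB : ∀ t s, |((MB ^ t).mulVec rB) s| ≤ Rm :=
      stoch_pow_mulVec_abs_le MB (hM0 νB) (hM1 νB) rB Rm hrB_abs
    have hsumB : Summable fun t : ℕ => γ ^ t * ((MB ^ t).mulVec rB) s₀ :=
      summable_geom_mul hγ0.le hγ1 _ (fun t => habsB t s₀)
    have hgeoB : Summable fun t : ℕ => -(γ ^ t * Rm) :=
      ((summable_geometric_of_lt_one hγ0.le hγ1).mul_right Rm).neg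
    have hlow : -(D * Rm) ≤ detValue (fun s ah s' => ∑ a, π ah a * p s a s')
        (fun s ah _ => if ah ∈ B s then g s ah else C) γ νB s₀ := by
      rw [hdet νB s₀]
      have hts := Summable.tsum_le_tsum
        (fun t : ℕ => by
          have h := (abs_le.1 (habsB t s₀)).1
          have : -(γ ^ t * Rm) ≤ γ ^ t * ((MB ^ t).mulVec rB) s₀ := by
            have := mul_le_mul_of_nonneg_left h (pow_nonneg hγ0.le t)
            nlinarith [pow_nonneg hγ0.le t]
          exact this)
        hgeoB hsumB
      have hval : ∑' t : ℕ, -(γ ^ t * Rm) = -(D * Rm) := by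
        rw [tsum_neg, tsum_mul_right, tsum_geometric_of_lt_one hγ0.le hγ1, ← hDdef]
      linarith [hts, hval.le, hval.ge]
    have hcontra := hopt νB s₀
    have hfinal : -(D * Rm) ≤ C + γ * (D * Rm) := le_trans hlow (le_trans hcontra hup)
    rw [hCdef] at hfinal
    nlinarith [mul_pos hD0 (show (0:ℝ) < Rm * (1 - γ) + 1 by nlinarith)]
  refine ⟨hmem, ?_⟩
  -- Part 2 : detValue = - advValue for compliant adversaries
  have key : ∀ (μ : S → S), (∀ s, μ s ∈ B s) → ∀ s,
      detValue (fun s ah s' => ∑ a, π ah a * p s a s')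
        (fun s ah _ => if ah ∈ B s then g s ah else C) γ μ s =
      - advValue p R γ π μ s := by
    intro μ hμ s
    rw [hdet μ s]
    rw [advValue, ← tsum_neg]
    refine tsum_congr fun t => ?_
    have hv : (fun s₁ => if μ s₁ ∈ B s₁ then g s₁ (μ s₁) else C)
        = -(fun s₁ => ∑ a, π (μ s₁) a * ∑ s', p s₁ a s' * R s₁ a s') := by
      funext s₁
      rw [if_pos (hμ s₁)]
      simp [hg]
    rw [hv, Matrix.mulVec_neg]
    simp [mul_neg]
  intro ν hν s
  have h := hopt ν s
  rw [key ν hν s, key νstar hmem s] at h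
  linarith
end

section
/- If every optimal policy of the adversary-MDP M̂ never takes an action outside B(s), then for every deterministic adversary ν with ν(s) ∈ B(s) for all s, the value functions satisfy V̂_{ν}(s) = −Ṽ_{π∘ν}(s) for all s. -/
open Finset

/-- If every optimal deterministic policy of the adversary-MDP M̂ always takes actions
inside B(s), then for every deterministic adversary ν with ν(s) ∈ B(s) for all s, the
value of ν in M̂ is the negation of the adversarial value of π under ν. -/
theorem adversary_mdp_value_neg
    {S A : Type*} [Fintype S] [Fintype A] [DecidableEq S]
    (p : S → A → S → ℝ) (R : S → A → S → ℝ) (γ : ℝ)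
    (hγ0 : 0 < γ) (hγ1 : γ < 1)
    (B : S → Finset S) (hB : ∀ s, (B s).Nonempty)
    (π : S → A → ℝ) (hπ0 : ∀ s a, 0 ≤ π s a) (hπ1 : ∀ s, ∑ a, π s a = 1)
    (hp0 : ∀ s a s', 0 ≤ p s a s') (hp1 : ∀ s a, ∑ s', p s a s' = 1)
    (ph : S → S → S → ℝ) (Rh : S → S → S → ℝ)
    (hph : ∀ s ah s', ph s ah s' = ∑ a, π ah a * p s a s')
    (hRh : ∀ s ah s', ah ∈ B s →
      Rh s ah s' = -(∑ a, π ah a * p s a s' * R s a s') / (∑ a, π ah a * p s a s'))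
    (hopt : ∀ νstar : S → S,
      (∀ (ν : S → S) (s : S), detValue ph Rh γ ν s ≤ detValue ph Rh γ νstar s) →
      ∀ s, νstar s ∈ B s) :
    ∀ ν : S → S, (∀ s, ν s ∈ B s) →
      ∀ s, detValue ph Rh γ ν s = - advValue p R γ π ν s := by
  intro ν hν s
  unfold detValue advValue
  rw [← tsum_neg]
  congr 1
  funext t
  rw [← neg_mul, neg_mul_comm]
  congr 1
  have hM : (Matrix.of fun s₁ s₂ => ph s₁ (ν s₁) s₂)
      = (Matrix.of fun s₁ s₂ => ∑ a, π (ν s₁) a * p s₁ a s₂) := by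
    ext s₁ s₂; simp [hph]
  have hv : (fun s₁ => ∑ s', ph s₁ (ν s₁) s' * Rh s₁ (ν s₁) s')
      = -(fun s₁ => ∑ a, π (ν s₁) a * ∑ s', p s₁ a s' * R s₁ a s') := by
    funext s₁
    have : ∑ a, π (ν s₁) a * ∑ s', p s₁ a s' * R s₁ a s'
        = ∑ s', ∑ a, π (ν s₁) a * p s₁ a s' * R s₁ a s' := by
      rw [Finset.sum_comm]
      congr 1; funext a
      rw [Finset.mul_sum]
      congr 1; funext s'
      ring
    rw [Pi.neg_apply, this, ← Finset.sum_neg_distrib]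
    congr 1; funext s'
    rw [hph, hRh s₁ (ν s₁) s' (hν s₁)]
    set D := ∑ a, π (ν s₁) a * p s₁ a s' with hD
    by_cases h : D = 0
    · have hz : ∀ a ∈ Finset.univ, π (ν s₁) a * p s₁ a s' = 0 := by
        intro a ha
        have := (Finset.sum_eq_zero_iff_of_nonneg (fun a _ =>
          mul_nonneg (hπ0 _ a) (hp0 _ a _))).mp h
        exact this a ha
      have hN : ∑ a, π (ν s₁) a * p s₁ a s' * R s₁ a s' = 0 := by
        apply Finset.sum_eq_zero
        intro a ha
        rw [hz a ha, zero_mul]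
      rw [h, hN]; simp
    · field_simp
  rw [hM, hv, Matrix.mulVec_neg, Pi.neg_apply]
end
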